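/- Let f : 2^(N1 ⊔ N2) → ℝ≥0 be non-negative and jointly submodular, let F2 ⊆ 2^(N2) with ∅ ∈ F2, and let X* minimize max_{Y ∈ F2} f(X ∪ Y) over X ⊆ N1, with τ = max_{Y ∈ F2} f(X* ∪ Y). Consider the iterative process: X_0 ∈ argmin_{X ⊆ N1} f(X); given X_{i-1}, pick any Y_i ∈ F2 and let X'_i minimize √n1 · f(X ∪ X_{i-1}) + f(X ∪ Y_i) over X ⊆ N1, where n1 = |N1|. Then for every i with f(X* ∪ Y_i) ≤ τ, f(X_{i-1} ∪ X'_i) ≤ f((X* ∩ X'_i) ∪ X_{i-1}) + τ/√n1. -/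

import Mathlib

open Finset

/-- For `f` non-negative jointly submodular, `∅ ∈ F2`, `X*` a minimizer of
`max_{Y ∈ F2} f(X ∪ Y)` over `X ⊆ N1` with value `τ`, and `X'ᵢ` a minimizer of
`√n1 · f(X ∪ Xᵢ₋₁) + f(X ∪ Yᵢ)` over `X ⊆ N1` (for some `Yᵢ ∈ F2`): whenever
`f(X* ∪ Yᵢ) ≤ τ`, we have `f(Xᵢ₋₁ ∪ X'ᵢ) ≤ f((X* ∩ X'ᵢ) ∪ Xᵢ₋₁) + τ/√n1`. -/
theorem stmt_11 {α : Type*} [DecidableEq α] (N1 N2 : Finset α) (hdisj : Disjoint N1 N2)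
    (hN1 : 1 ≤ N1.card)
    (f : Finset α → ℝ)
    (hf_nonneg : ∀ S ⊆ N1 ∪ N2, 0 ≤ f S)
    (hf_sub : ∀ A ⊆ N1 ∪ N2, ∀ B ⊆ N1 ∪ N2, f (A ∪ B) + f (A ∩ B) ≤ f A + f B)
    (F2 : Finset (Finset α)) (hF2sub : ∀ Y ∈ F2, Y ⊆ N2) (hF2empty : ∅ ∈ F2)
    (Xstar : Finset α) (hXstar_sub : Xstar ⊆ N1)
    (τ : ℝ) (hτ : τ = F2.sup' ⟨∅, hF2empty⟩ (fun Y => f (Xstar ∪ Y)))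
    (hXstar_min : ∀ X ⊆ N1, τ ≤ F2.sup' ⟨∅, hF2empty⟩ (fun Y => f (X ∪ Y)))
    (Xprev : Finset α) (hXprev : Xprev ⊆ N1)
    (Yi : Finset α) (hYi : Yi ∈ F2)
    (X'i : Finset α) (hX'i_sub : X'i ⊆ N1)
    (hX'i_min : ∀ X ⊆ N1,
      Real.sqrt N1.card * f (X'i ∪ Xprev) + f (X'i ∪ Yi) ≤
        Real.sqrt N1.card * f (X ∪ Xprev) + f (X ∪ Yi))
    (hYτ : f (Xstar ∪ Yi) ≤ τ) :
    f (Xprev ∪ X'i) ≤ f ((Xstar ∩ X'i) ∪ Xprev) + τ / Real.sqrt N1.card := by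
  have hYiN2 := hF2sub Yi hYi
  have hsn : (0:ℝ) < Real.sqrt N1.card := Real.sqrt_pos.2 (by exact_mod_cast Nat.lt_of_lt_of_le Nat.zero_lt_one hN1)
  -- subset facts
  have hXs : Xstar ⊆ N1 ∪ N2 := hXstar_sub.trans Finset.subset_union_left
  have hX' : X'i ⊆ N1 ∪ N2 := hX'i_sub.trans Finset.subset_union_left
  have hYs : Yi ⊆ N1 ∪ N2 := hYiN2.trans Finset.subset_union_right
  have h1 : (Xstar ∪ Yi) ∪ (X'i ∪ Yi) = (Xstar ∪ X'i) ∪ Yi := by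
    ext x; simp [Finset.mem_union]; tauto
  have h2 : (Xstar ∪ Yi) ∩ (X'i ∪ Yi) = (Xstar ∩ X'i) ∪ Yi := by
    ext x; constructor
    · intro hx
      simp only [Finset.mem_inter, Finset.mem_union] at hx ⊢
      rcases hx with ⟨h1 | h1, h2 | h2⟩
      · exact Or.inl ⟨h1, h2⟩
      · exact Or.inr h2
      · exact Or.inr h1
      · exact Or.inr h1
    · intro hx
      simp only [Finset.mem_inter, Finset.mem_union] at hx ⊢
      tauto
  have hsub := hf_sub (Xstar ∪ Yi) (Finset.union_subset hXs hYs) (X'i ∪ Yi) (Finset.union_subset hX' hYs)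
  rw [h1, h2] at hsub
  have hnn := hf_nonneg ((Xstar ∪ X'i) ∪ Yi) (Finset.union_subset (Finset.union_subset hXs hX') hYs)
  have hkey : f ((Xstar ∩ X'i) ∪ Yi) ≤ τ + f (X'i ∪ Yi) := by linarith
  have hmin := hX'i_min (Xstar ∩ X'i) ((Finset.inter_subset_left).trans hXstar_sub)
  have hmain : Real.sqrt N1.card * f (X'i ∪ Xprev) ≤
      Real.sqrt N1.card * f ((Xstar ∩ X'i) ∪ Xprev) + τ := by linarith
  rw [Finset.union_comm Xprev X'i, div_eq_mul_inv]
  rw [← mul_le_mul_iff_right₀ hsn]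
  have : Real.sqrt N1.card * (τ * (Real.sqrt N1.card)⁻¹) = τ := by
    field_simp
  rw [mul_add, this]
  linarith
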